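/- Let (J, cl) be a finite convex 4-geometry with set of rooted triangles RT. Then the following are equivalent: (i) (J, cl) has a realization; (ii) there exists an injective map f : J → ℝ² whose image is in general position such that for all distinct a, b, c, d ∈ J: ({a,b,c}, d) ∈ RT if and only if sign(f a, f b, f c) = sign(f d, f b, f c) = sign(f a, f d, f c) = sign(f a, f b, f d). -/

import Mathlib

open Set

/-- Orientation sign of a triple of points in the plane: the sign of the determinant of
the matrix with columns `y - x` and `z - x`. -/
noncomputable def osign (x y z : Fin 2 → ℝ) : ℝ :=
  Real.sign ((y 0 - x 0) * (z 1 - x 1) - (y 1 - x 1) * (z 0 - x 0))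

/-- A planar point set is in general position if no three distinct points are collinear. -/
def GenPos (X : Set (Fin 2 → ℝ)) : Prop :=
  ∀ x ∈ X, ∀ y ∈ X, ∀ z ∈ X, x ≠ y → y ≠ z → x ≠ z →
    ¬ Collinear ℝ ({x, y, z} : Set (Fin 2 → ℝ))

/-- A convex geometry on a finite set `J`: a closure operator satisfying the
anti-exchange axiom. -/
structure ConvexGeometry (J : Type) [Fintype J] where
  cl : Set J → Set J
  extensive : ∀ A : Set J, A ⊆ cl A
  mono : ∀ A B : Set J, A ⊆ B → cl A ⊆ cl B
  idem : ∀ A : Set J, cl (cl A) = cl A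
  antiExchange : ∀ A : Set J, cl A = A → ∀ x y : J, x ≠ y → x ∉ A → y ∉ A →
    x ∈ cl (A ∪ {y}) → y ∉ cl (A ∪ {x})

variable {J : Type} [Fintype J]

/-- A set is dependent if some element lies in the closure of the rest. -/
def ConvexGeometry.Dependent (G : ConvexGeometry J) (D : Set J) : Prop :=
  ∃ x ∈ D, x ∈ G.cl (D \ {x})

/-- A circuit is an inclusion-minimal dependent set. -/
def ConvexGeometry.IsCircuit (G : ConvexGeometry J) (C : Set J) : Prop :=
  G.Dependent C ∧ ∀ D ⊆ C, G.Dependent D → D = C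

/-- A convex 4-geometry: all circuits have exactly 4 elements. -/
def ConvexGeometry.Is4Geometry (G : ConvexGeometry J) : Prop :=
  ∀ C : Set J, G.IsCircuit C → C.ncard = 4

/-- `(T, a)` is a rooted triangle of `G` if `T ∪ {a}` is a circuit with root `a`. -/
def ConvexGeometry.RT (G : ConvexGeometry J) (T : Set J) (a : J) : Prop :=
  a ∉ T ∧ G.IsCircuit (insert a T) ∧ a ∈ G.cl T

/-- A realization of a convex geometry in the plane. -/
def IsRealization (G : ConvexGeometry J) (f : J → (Fin 2 → ℝ)) : Prop :=
  Function.Injective f ∧ GenPos (Set.range f) ∧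
    ∀ Y : Set J, f '' (G.cl Y) = convexHull ℝ (f '' Y) ∩ Set.range f

/-- `G.rest n` is the set `Jₙ` remaining after removing the first `n` layers. -/
def ConvexGeometry.rest (G : ConvexGeometry J) : ℕ → Set J
  | 0 => Set.univ
  | n + 1 => {x ∈ G.rest n | x ∈ G.cl (G.rest n \ {x})}

/-- The `n`-th layer: the extreme points of the restricted geometry on `G.rest n`. -/
def ConvexGeometry.layer (G : ConvexGeometry J) (n : ℕ) : Set J :=
  {x ∈ G.rest n | x ∉ G.cl (G.rest n \ {x})}


section Aux

noncomputable def det3 (x y z : Fin 2 → ℝ) : ℝ :=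
  (y 0 - x 0) * (z 1 - x 1) - (y 1 - x 1) * (z 0 - x 0)

lemma osign_eq (x y z : Fin 2 → ℝ) : osign x y z = Real.sign (det3 x y z) := rfl

lemma collinear_of_det3_eq_zero {x y z : Fin 2 → ℝ} (h : det3 x y z = 0) :
    Collinear ℝ ({x, y, z} : Set (Fin 2 → ℝ)) := by
  rw [collinear_iff_of_mem (mem_insert x _)]
  by_cases hyx : y = x
  · refine ⟨z - x, ?_⟩
    rintro p (rfl | rfl | rfl)
    · exact ⟨0, by simp⟩
    · exact ⟨0, by simp [hyx]⟩
    · exact ⟨1, by simp⟩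
  · have hyx' : y 0 - x 0 ≠ 0 ∨ y 1 - x 1 ≠ 0 := by
      by_contra hc
      push_neg at hc
      apply hyx
      funext i
      fin_cases i
      · simpa using by linarith [hc.1]
      · simpa using by linarith [hc.2]
    refine ⟨y - x, ?_⟩
    rintro p (rfl | rfl | rfl)
    · exact ⟨0, by simp⟩
    · exact ⟨1, by simp⟩
    · simp only [det3] at h
      rcases hyx' with h0 | h0
      · refine ⟨(p 0 - x 0) / (y 0 - x 0), ?_⟩
        funext i
        fin_cases i <;>
          simp only [Pi.smul_apply, Pi.sub_apply, smul_eq_mul, vadd_eq_add, Pi.add_apply,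
            Fin.zero_eta, Fin.mk_one]
        · field_simp; ring
        · field_simp
          nlinarith [h]
      · refine ⟨(p 1 - x 1) / (y 1 - x 1), ?_⟩
        funext i
        fin_cases i <;>
          simp only [Pi.smul_apply, Pi.sub_apply, smul_eq_mul, vadd_eq_add, Pi.add_apply,
            Fin.zero_eta, Fin.mk_one]
        · field_simp
          nlinarith [h]
        · field_simp; ring

lemma mem_convexHull_triple {a b c p : Fin 2 → ℝ} :
    p ∈ convexHull ℝ ({a, b, c} : Set (Fin 2 → ℝ)) ↔
      ∃ w₁ w₂ w₃ : ℝ, 0 ≤ w₁ ∧ 0 ≤ w₂ ∧ 0 ≤ w₃ ∧ w₁ + w₂ + w₃ = 1 ∧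
        w₁ • a + w₂ • b + w₃ • c = p := by
  rw [convexHull_insert (insert_nonempty b {c}), convexHull_pair]
  rw [mem_convexJoin]
  constructor
  · rintro ⟨q, rfl : q = a, z, hz, hp⟩
    rw [segment_eq_image] at hz hp
    obtain ⟨u, hu, rfl⟩ := hz
    obtain ⟨t, ht, rfl⟩ := hp
    refine ⟨1 - t, t * (1 - u), t * u, by linarith [hu.1, hu.2, ht.1, ht.2],
      mul_nonneg ht.1 (by linarith [hu.2]), mul_nonneg ht.1 hu.1, by ring, ?_⟩
    funext i
    simp only [Pi.add_apply, Pi.smul_apply, smul_eq_mul]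
    ring
  · rintro ⟨w₁, w₂, w₃, h1, h2, h3, hsum, rfl⟩
    by_cases h23 : w₂ + w₃ = 0
    · have hw2 : w₂ = 0 := by linarith
      have hw3 : w₃ = 0 := by linarith
      refine ⟨a, rfl, b, left_mem_segment _ _ _, ?_⟩
      have hw1 : w₁ = 1 := by linarith
      subst hw1
      rw [hw2, hw3]
      simp only [one_smul, zero_smul, add_zero]
      exact left_mem_segment _ _ _
    · have h23' : 0 < w₂ + w₃ := lt_of_le_of_ne (by linarith) (Ne.symm h23)
      refine ⟨a, rfl, (w₂ / (w₂ + w₃)) • b + (w₃ / (w₂ + w₃)) • c, ?_, ?_⟩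
      · rw [segment_eq_image]
        exact ⟨w₃ / (w₂ + w₃), ⟨div_nonneg h3 h23'.le, by
          rw [div_le_one h23']; linarith⟩, by
          funext i
          simp only [Pi.add_apply, Pi.smul_apply, smul_eq_mul]
          field_simp
          ring⟩
      · rw [segment_eq_image]
        refine ⟨w₂ + w₃, ⟨h23'.le, by linarith⟩, ?_⟩
        funext i
        simp only [Pi.add_apply, Pi.smul_apply, smul_eq_mul]
        field_simp
        linear_combination (-(a i)) * hsum

lemma real_sign_mul_pos {r x : ℝ} (hr : 0 < r) : Real.sign (r * x) = Real.sign x := by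
  rcases lt_trichotomy x 0 with h | rfl | h
  · rw [Real.sign_of_neg h, Real.sign_of_neg (mul_neg_of_pos_of_neg hr h)]
  · simp [Real.sign_zero]
  · rw [Real.sign_of_pos h, Real.sign_of_pos (mul_pos hr h)]

lemma div_pos_of_sign_eq {x y : ℝ} (hx : x ≠ 0) (h : Real.sign x = Real.sign y) :
    0 < y / x := by
  have hy : y ≠ 0 := by
    rintro rfl
    rw [Real.sign_zero] at h
    exact hx (Real.sign_eq_zero_iff.mp h)
  rcases lt_trichotomy x 0 with h1 | h1 | h1
  · rcases lt_trichotomy y 0 with h2 | h2 | h2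
    · exact div_pos_of_neg_of_neg h2 h1
    · exact absurd h2 hy
    · rw [Real.sign_of_neg h1, Real.sign_of_pos h2] at h; norm_num at h
  · exact absurd h1 hx
  · rcases lt_trichotomy y 0 with h2 | h2 | h2
    · rw [Real.sign_of_pos h1, Real.sign_of_neg h2] at h; norm_num at h
    · exact absurd h2 hy
    · exact div_pos h2 h1

/-- Sign characterization of membership in a nondegenerate triangle. -/
lemma mem_triangle_iff_osign {a b c p : Fin 2 → ℝ}
    (hd : det3 a b c ≠ 0) (h1 : det3 p b c ≠ 0) (h2 : det3 a p c ≠ 0)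
    (h3 : det3 a b p ≠ 0) :
    p ∈ convexHull ℝ ({a, b, c} : Set (Fin 2 → ℝ)) ↔
      (osign a b c = osign p b c ∧ osign a b c = osign a p c ∧
        osign a b c = osign a b p) := by
  constructor
  · rintro hp
    obtain ⟨w₁, w₂, w₃, hw1, hw2, hw3, hsum, hcomb⟩ := mem_convexHull_triple.mp hp
    have hp0 : p 0 = w₁ * a 0 + w₂ * b 0 + w₃ * c 0 := by
      have := congrFun hcomb 0; simpa [Pi.add_apply] using this.symm
    have hp1 : p 1 = w₁ * a 1 + w₂ * b 1 + w₃ * c 1 := by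
      have := congrFun hcomb 1; simpa [Pi.add_apply] using this.symm
    have hw1' : w₁ = 1 - w₂ - w₃ := by linarith
    have e1 : det3 p b c = w₁ * det3 a b c := by
      simp only [det3, hp0, hp1, hw1']; ring
    have e2 : det3 a p c = w₂ * det3 a b c := by
      simp only [det3, hp0, hp1, hw1']; ring
    have e3 : det3 a b p = w₃ * det3 a b c := by
      simp only [det3, hp0, hp1, hw1']; ring
    have hw1p : 0 < w₁ := lt_of_le_of_ne hw1 (by
      rintro rfl; rw [e1] at h1; simp at h1)
    have hw2p : 0 < w₂ := lt_of_le_of_ne hw2 (by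
      rintro rfl; rw [e2] at h2; simp at h2)
    have hw3p : 0 < w₃ := lt_of_le_of_ne hw3 (by
      rintro rfl; rw [e3] at h3; simp at h3)
    refine ⟨?_, ?_, ?_⟩ <;> rw [osign_eq, osign_eq]
    · rw [e1, real_sign_mul_pos hw1p]
    · rw [e2, real_sign_mul_pos hw2p]
    · rw [e3, real_sign_mul_pos hw3p]
  · rintro ⟨s1, s2, s3⟩
    rw [osign_eq, osign_eq] at s1 s2 s3
    have q1 : 0 < det3 p b c / det3 a b c := div_pos_of_sign_eq hd s1
    have q2 : 0 < det3 a p c / det3 a b c := div_pos_of_sign_eq hd s2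
    have q3 : 0 < det3 a b p / det3 a b c := div_pos_of_sign_eq hd s3
    refine mem_convexHull_triple.mpr
      ⟨det3 p b c / det3 a b c, det3 a p c / det3 a b c, det3 a b p / det3 a b c,
        q1.le, q2.le, q3.le, ?_, ?_⟩
    · field_simp
      simp only [det3]; ring
    · funext i
      simp only [Pi.add_apply, Pi.smul_apply, smul_eq_mul]
      rw [div_mul_eq_mul_div, div_mul_eq_mul_div, div_mul_eq_mul_div,
        ← add_div, ← add_div, div_eq_iff hd]
      fin_cases i <;> · simp only [det3, Fin.zero_eta, Fin.mk_one]; ring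

lemma det3_ne_zero_of_genpos {X : Set (Fin 2 → ℝ)} (hX : GenPos X) {x y z : Fin 2 → ℝ}
    (hx : x ∈ X) (hy : y ∈ X) (hz : z ∈ X) (hxy : x ≠ y) (hyz : y ≠ z) (hxz : x ≠ z) :
    det3 x y z ≠ 0 :=
  fun h => hX x hx y hy z hz hxy hyz hxz (collinear_of_det3_eq_zero h)

lemma caratheodory_step {J : Type} (f : J → (Fin 2 → ℝ)) (hinj : Function.Injective f)
    (hGP : GenPos (Set.range f)) (Y : Set J) (x : J) (hxY : x ∉ Y)
    (hx : f x ∈ convexHull ℝ (f '' Y)) :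
    ∃ a b c : J, a ∈ Y ∧ b ∈ Y ∧ c ∈ Y ∧ a ≠ b ∧ a ≠ c ∧ b ≠ c ∧ x ≠ a ∧ x ≠ b ∧ x ≠ c ∧
      f x ∈ convexHull ℝ ({f a, f b, f c} : Set (Fin 2 → ℝ)) := by
  rw [convexHull_eq_union] at hx
  simp only [mem_iUnion] at hx
  obtain ⟨t, hts, hai, hx'⟩ := hx
  have hne : x ∉ (∅ : Set J) := notMem_empty x
  -- x's image is distinct from every point of f '' Y
  have hfx : ∀ z ∈ Y, f x ≠ f z := fun z hz h => hxY (hinj h ▸ hz)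
  have hcard : t.card ≤ 3 := by
    have h1 := hai.card_le_finrank_succ
    rw [Fintype.card_coe] at h1
    have h2 : Module.finrank ℝ (vectorSpan ℝ (Set.range ((↑) : t → (Fin 2 → ℝ)))) ≤ 2 := by
      have := Submodule.finrank_le (vectorSpan ℝ (Set.range ((↑) : t → (Fin 2 → ℝ))))
      rwa [Module.finrank_fintype_fun_eq_card, Fintype.card_fin] at this
    omega
  have htne : t.Nonempty := by
    rcases Finset.eq_empty_or_nonempty t with rfl | h
    · simp at hx'
    · exact h
  have hc1 : 1 ≤ t.card := Finset.card_pos.mpr htne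
  interval_cases h : t.card
  · -- card 1
    obtain ⟨p, rfl⟩ := Finset.card_eq_one.mp h
    simp only [Finset.coe_singleton, convexHull_singleton, mem_singleton_iff] at hx'
    obtain ⟨a, ha, rfl⟩ := hts (by simp : p ∈ (({p} : Finset _) : Set _))
    exact absurd hx' (hfx a ha)
  · -- card 2
    obtain ⟨p, q, hpq, rfl⟩ := Finset.card_eq_two.mp h
    have hp := hts (by simp : p ∈ (({p, q} : Finset _) : Set _))
    have hq := hts (by simp : q ∈ (({p, q} : Finset _) : Set _))
    obtain ⟨a, ha, rfl⟩ := hp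
    obtain ⟨b, hb, rfl⟩ := hq
    exfalso
    rw [Finset.coe_insert, Finset.coe_singleton, convexHull_pair, segment_eq_image] at hx'
    obtain ⟨u, _, hu⟩ := hx'
    have hd : det3 (f a) (f b) (f x) = 0 := by
      have h0 := congrFun hu 0
      have h1 := congrFun hu 1
      simp only [Pi.add_apply, Pi.smul_apply, smul_eq_mul] at h0 h1
      simp only [det3, ← h0, ← h1]
      ring
    exact hGP (f a) (mem_range_self a) (f b) (mem_range_self b) (f x) (mem_range_self x)
      hpq (Ne.symm (hfx b hb)) (Ne.symm (hfx a ha)) (collinear_of_det3_eq_zero hd)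
  · -- card 3
    obtain ⟨p, q, r, hpq, hpr, hqr, rfl⟩ := Finset.card_eq_three.mp h
    have hp := hts (by simp : p ∈ (({p, q, r} : Finset _) : Set _))
    have hq := hts (by simp : q ∈ (({p, q, r} : Finset _) : Set _))
    have hr := hts (by simp : r ∈ (({p, q, r} : Finset _) : Set _))
    obtain ⟨a, ha, rfl⟩ := hp
    obtain ⟨b, hb, rfl⟩ := hq
    obtain ⟨c, hc, rfl⟩ := hr
    refine ⟨a, b, c, ha, hb, hc, fun e => hpq (by rw [e]), fun e => hpr (by rw [e]),
      fun e => hqr (by rw [e]), fun e => hfx a ha (by rw [e]), fun e => hfx b hb (by rw [e]),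
      fun e => hfx c hc (by rw [e]), ?_⟩
    simpa using hx'

/-- Every dependent set contains a circuit. -/
lemma exists_circuit_subset (G : ConvexGeometry J) :
    ∀ D : Set J, G.Dependent D → ∃ C ⊆ D, G.IsCircuit C := by
  intro D
  induction' hn : D.ncard using Nat.strong_induction_on with n ih generalizing D
  intro hD
  by_cases hC : ∀ D' ⊆ D, G.Dependent D' → D' = D
  · exact ⟨D, subset_rfl, hD, hC⟩
  · push_neg at hC
    obtain ⟨D', hD'sub, hD'dep, hne⟩ := hC
    have hlt : D'.ncard < n := by
      rw [← hn]
      exact Set.ncard_lt_ncard (ssubset_of_subset_of_ne hD'sub hne) (Set.toFinite D)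
    obtain ⟨C, hCD', hC⟩ := ih D'.ncard hlt D' rfl hD'dep
    exact ⟨C, hCD'.trans hD'sub, hC⟩

/-- In a 4-geometry, if `d ∈ cl {a,b,c}` with all four distinct, then `({a,b,c}, d)`
is a rooted triangle. -/
lemma rt_of_mem_cl (G : ConvexGeometry J) (h4 : G.Is4Geometry) {a b c d : J}
    (hab : a ≠ b) (hac : a ≠ c) (had : a ≠ d) (hbc : b ≠ c) (hbd : b ≠ d) (hcd : c ≠ d)
    (hd : d ∈ G.cl {a, b, c}) : G.RT {a, b, c} d := by
  have hdnot : d ∉ ({a, b, c} : Set J) := by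
    simp only [mem_insert_iff, mem_singleton_iff]
    push_neg
    exact ⟨had.symm, hbd.symm, hcd.symm⟩
  have hdiff : insert d ({a, b, c} : Set J) \ {d} = {a, b, c} := by
    rw [insert_diff_of_mem _ (mem_singleton d), diff_singleton_eq_self hdnot]
  have hScard : (insert d ({a, b, c} : Set J)).ncard = 4 := by
    rw [Set.ncard_insert_of_notMem hdnot (Set.toFinite _),
      Set.ncard_insert_of_notMem (by simp [hab, hac]) (Set.toFinite _),
      Set.ncard_insert_of_notMem (by simp [hbc]) (Set.toFinite _),
      Set.ncard_singleton]
  refine ⟨hdnot, ⟨⟨d, mem_insert d _, by rwa [hdiff]⟩, ?_⟩, hd⟩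
  intro D hDsub hDdep
  obtain ⟨C, hCD, hC⟩ := exists_circuit_subset G D hDdep
  have hCcard := h4 C hC
  have hCeq : C = insert d ({a, b, c} : Set J) :=
    Set.eq_of_subset_of_ncard_le (hCD.trans hDsub) (by rw [hCcard, hScard]) (Set.toFinite _)
  exact subset_antisymm hDsub (hCeq ▸ hCD)

/-- In a 4-geometry, closure is generated by rooted triangles. -/
lemma exists_triangle_of_mem_cl (G : ConvexGeometry J) (h4 : G.Is4Geometry) {Y : Set J}
    {x : J} (hx : x ∈ G.cl Y) (hxY : x ∉ Y) :
    ∃ a b c : J, a ∈ Y ∧ b ∈ Y ∧ c ∈ Y ∧ a ≠ b ∧ a ≠ c ∧ b ≠ c ∧ x ≠ a ∧ x ≠ b ∧ x ≠ c ∧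
      x ∈ G.cl {a, b, c} := by
  classical
  have hex : ∃ n : ℕ, ∃ Z : Set J, Z ⊆ Y ∧ Z.ncard = n ∧ x ∈ G.cl Z :=
    ⟨Y.ncard, Y, subset_rfl, rfl, hx⟩
  obtain ⟨Y', hY'sub, hY'card, hxY'⟩ := Nat.find_spec hex
  have hminimal : ∀ Z : Set J, Z ⊆ Y → x ∈ G.cl Z → Y'.ncard ≤ Z.ncard := by
    intro Z hZ hxZ
    rw [hY'card]
    exact Nat.find_min' hex ⟨Z, hZ, rfl, hxZ⟩
  have hxnotY' : x ∉ Y' := fun h => hxY (hY'sub h)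
  have hdep : G.Dependent (insert x Y') := by
    refine ⟨x, mem_insert x _, ?_⟩
    rwa [insert_diff_of_mem _ (mem_singleton x), diff_singleton_eq_self hxnotY']
  obtain ⟨C, hCsub, hC⟩ := exists_circuit_subset G _ hdep
  have hxC : x ∈ C := by
    by_contra hxC
    have hCY' : C ⊆ Y' := fun z hz => ((hCsub hz).resolve_left (fun h => hxC (h ▸ hz)))
    obtain ⟨z, hzC, hzcl⟩ := hC.1
    have hzY' : z ∈ Y' := hCY' hzC
    have hsub2 : Y' ⊆ G.cl (Y' \ {z}) := by
      intro y hy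
      by_cases hyz : y = z
      · subst hyz
        exact G.mono _ _ (diff_subset_diff_left hCY') hzcl
      · exact G.extensive _ ⟨hy, hyz⟩
    have h1 : G.cl Y' ⊆ G.cl (Y' \ {z}) := by
      calc G.cl Y' ⊆ G.cl (G.cl (Y' \ {z})) := G.mono _ _ hsub2
        _ = G.cl (Y' \ {z}) := G.idem _
    have hge := hminimal (Y' \ {z}) (diff_subset.trans hY'sub) (h1 hxY')
    have hlt := Set.ncard_diff_singleton_lt_of_mem hzY' (Set.toFinite _)
    omega
  -- the root of the circuit C must be x
  have hroot : x ∈ G.cl (C \ {x}) := by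
    obtain ⟨z, hzC, hzcl⟩ := hC.1
    by_cases hzx : z = x
    · subst hzx; exact hzcl
    · exfalso
      have hzY' : z ∈ Y' := ((hCsub hzC).resolve_left hzx)
      set A := G.cl (Y' \ {z}) with hA
      have hclA : G.cl A = A := G.idem _
      have hxA : x ∉ A := by
        intro hxA
        have hge := hminimal (Y' \ {z}) (diff_subset.trans hY'sub) hxA
        have hlt := Set.ncard_diff_singleton_lt_of_mem hzY' (Set.toFinite _)
        omega
      have hzA : z ∉ A := by
        intro hzA
        have hsub2 : Y' ⊆ A := by
          intro y hy
          by_cases hyz : y = z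
          · exact hyz ▸ hzA
          · exact G.extensive _ ⟨hy, hyz⟩
        have hcl : G.cl Y' ⊆ A := by
          calc G.cl Y' ⊆ G.cl A := G.mono _ _ hsub2
            _ = A := hclA
        exact hxA (hcl hxY')
      have hzcl' : z ∈ G.cl (A ∪ {x}) := by
        have hs1 : C \ {z} ⊆ (Y' \ {z}) ∪ {x} := by
          rintro w ⟨hwC, hwz⟩
          rcases hCsub hwC with h | h
          · exact Or.inr h
          · exact Or.inl ⟨h, hwz⟩
        have hs2 : (Y' \ {z}) ∪ {x} ⊆ A ∪ {x} :=
          union_subset_union_left _ (G.extensive _)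
        exact G.mono _ _ (hs1.trans hs2) hzcl
      have hnx := G.antiExchange A hclA z x hzx hzA hxA hzcl'
      apply hnx
      have hs3 : Y' ⊆ A ∪ {z} := by
        intro y hy
        by_cases hyz : y = z
        · exact Or.inr hyz
        · exact Or.inl (G.extensive _ ⟨hy, hyz⟩)
      exact G.mono _ _ hs3 hxY'
  -- conclude : C \ {x} = Y' and has 3 elements
  have hCxY' : C \ {x} ⊆ Y' := by
    rintro w ⟨hwC, hwx⟩
    exact (hCsub hwC).resolve_left hwx
  have hge := hminimal (C \ {x}) (hCxY'.trans hY'sub) hroot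
  have hY'eq : C \ {x} = Y' := Set.eq_of_subset_of_ncard_le hCxY' hge (Set.toFinite _)
  have hCcard := h4 C hC
  have h3 : Y'.ncard = 3 := by
    rw [← hY'eq]
    rw [Set.ncard_diff_singleton_of_mem hxC, hCcard]
  obtain ⟨a, b, c, hab, hac, hbc, rfl⟩ := Set.ncard_eq_three.mp h3
  have hxa : x ≠ a := fun h => hxnotY' (by rw [h]; exact mem_insert _ _)
  have hxb : x ≠ b := fun h => hxnotY' (by rw [h]; right; left; rfl)
  have hxc : x ≠ c := fun h => hxnotY' (by rw [h]; right; right; rfl)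
  exact ⟨a, b, c, hY'sub (mem_insert a _), hY'sub (by right; left; rfl),
    hY'sub (by right; right; rfl), hab, hac, hbc, hxa, hxb, hxc, hxY'⟩

lemma four_dets {f : J → (Fin 2 → ℝ)} (hinj : Function.Injective f)
    (hGP : GenPos (Set.range f)) {a b c d : J}
    (hab : a ≠ b) (hac : a ≠ c) (had : a ≠ d) (hbc : b ≠ c) (hbd : b ≠ d) (hcd : c ≠ d) :
    det3 (f a) (f b) (f c) ≠ 0 ∧ det3 (f d) (f b) (f c) ≠ 0 ∧
      det3 (f a) (f d) (f c) ≠ 0 ∧ det3 (f a) (f b) (f d) ≠ 0 :=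
  ⟨det3_ne_zero_of_genpos hGP (mem_range_self a) (mem_range_self b) (mem_range_self c)
      (hinj.ne hab) (hinj.ne hbc) (hinj.ne hac),
    det3_ne_zero_of_genpos hGP (mem_range_self d) (mem_range_self b) (mem_range_self c)
      (hinj.ne hbd.symm) (hinj.ne hbc) (hinj.ne hcd.symm),
    det3_ne_zero_of_genpos hGP (mem_range_self a) (mem_range_self d) (mem_range_self c)
      (hinj.ne had) (hinj.ne hcd.symm) (hinj.ne hac),
    det3_ne_zero_of_genpos hGP (mem_range_self a) (mem_range_self b) (mem_range_self d)
      (hinj.ne hab) (hinj.ne hbd) (hinj.ne had)⟩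


end Aux

/-- A convex 4-geometry is realizable iff some injective map `f : J → ℝ²`
with image in general position translates rooted triangles into the corresponding
orientation equalities. -/
theorem realizable_iff_order_type (G : ConvexGeometry J) (h4 : G.Is4Geometry) :
    (∃ f : J → (Fin 2 → ℝ), IsRealization G f) ↔
    (∃ f : J → (Fin 2 → ℝ), Function.Injective f ∧ GenPos (Set.range f) ∧
      ∀ a b c d : J, a ≠ b → a ≠ c → a ≠ d → b ≠ c → b ≠ d → c ≠ d →
        (G.RT ({a, b, c} : Set J) d ↔
          osign (f a) (f b) (f c) = osign (f d) (f b) (f c) ∧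
          osign (f a) (f b) (f c) = osign (f a) (f d) (f c) ∧
          osign (f a) (f b) (f c) = osign (f a) (f b) (f d))) := by
  constructor
  · rintro ⟨f, hinj, hGP, hcl⟩
    refine ⟨f, hinj, hGP, ?_⟩
    intro a b c d hab hac had hbc hbd hcd
    obtain ⟨d0, d1, d2, d3⟩ := four_dets hinj hGP hab hac had hbc hbd hcd
    have himg : f '' ({a, b, c} : Set J) = ({f a, f b, f c} : Set (Fin 2 → ℝ)) := by
      simp [Set.image_insert_eq]
    have hdmem : d ∈ G.cl {a, b, c} ↔
        f d ∈ convexHull ℝ ({f a, f b, f c} : Set (Fin 2 → ℝ)) := by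
      constructor
      · intro hd
        have : f d ∈ f '' (G.cl {a, b, c}) := mem_image_of_mem f hd
        rw [hcl, himg] at this
        exact this.1
      · intro hd
        have : f d ∈ convexHull ℝ (f '' ({a, b, c} : Set J)) ∩ Set.range f := by
          rw [himg]; exact ⟨hd, mem_range_self d⟩
        rw [← hcl] at this
        obtain ⟨e, he, hfe⟩ := this
        rwa [← hinj hfe]
    constructor
    · intro hRT
      exact (mem_triangle_iff_osign d0 d1 d2 d3).mp (hdmem.mp hRT.2.2)
    · intro hs
      exact rt_of_mem_cl G h4 hab hac had hbc hbd hcd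
        (hdmem.mpr ((mem_triangle_iff_osign d0 d1 d2 d3).mpr hs))
  · rintro ⟨f, hinj, hGP, hiff⟩
    refine ⟨f, hinj, hGP, ?_⟩
    intro Y
    apply subset_antisymm
    · rintro _ ⟨x, hx, rfl⟩
      refine ⟨?_, mem_range_self x⟩
      by_cases hxY : x ∈ Y
      · exact subset_convexHull _ _ (mem_image_of_mem f hxY)
      · obtain ⟨a, b, c, ha, hb, hc, hab, hac, hbc, hxa, hxb, hxc, hxcl⟩ :=
          exists_triangle_of_mem_cl G h4 hx hxY
        obtain ⟨d0, d1, d2, d3⟩ := four_dets hinj hGP hab hac hxa.symm hbc hxb.symm hxc.symm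
        have hRT : G.RT {a, b, c} x :=
          rt_of_mem_cl G h4 hab hac hxa.symm hbc hxb.symm hxc.symm hxcl
        have hs := (hiff a b c x hab hac hxa.symm hbc hxb.symm hxc.symm).mp hRT
        have hmem : f x ∈ convexHull ℝ ({f a, f b, f c} : Set (Fin 2 → ℝ)) :=
          (mem_triangle_iff_osign d0 d1 d2 d3).mpr hs
        refine convexHull_mono ?_ hmem
        rintro p (rfl | rfl | rfl)
        · exact mem_image_of_mem f ha
        · exact mem_image_of_mem f hb
        · exact mem_image_of_mem f hc
    · rintro _ ⟨hconv, ⟨x, rfl⟩⟩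
      by_cases hxY : x ∈ Y
      · exact ⟨x, G.extensive Y hxY, rfl⟩
      · obtain ⟨a, b, c, ha, hb, hc, hab, hac, hbc, hxa, hxb, hxc, hmem⟩ :=
          caratheodory_step f hinj hGP Y x hxY hconv
        obtain ⟨d0, d1, d2, d3⟩ := four_dets hinj hGP hab hac hxa.symm hbc hxb.symm hxc.symm
        have hs := (mem_triangle_iff_osign d0 d1 d2 d3).mp hmem
        have hRT := (hiff a b c x hab hac hxa.symm hbc hxb.symm hxc.symm).mpr hs
        refine ⟨x, ?_, rfl⟩
        have hsub : ({a, b, c} : Set J) ⊆ Y := by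
          rintro p (rfl | rfl | rfl)
          · exact ha
          · exact hb
          · exact hc
        exact G.mono _ _ hsub hRT.2.2
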